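/- Let μ be the product measure on ℝ² of the exponential distribution with rate 1 (density e^{−x} on [0,∞)) and the exponential distribution with rate 2 (density 2e^{−2x} on [0,∞)). Then for every x¹, x² ∈ ℝ, as n → ∞: (a) n·μ( (−∞, (log n)/2 + x¹] × ((log n)/2 + x², ∞) ) → e^{−2x²}, and (b) n·μ( ((log n)/2 + x¹, ∞) × ((log n)/2 + x², ∞) ) → 0. -/

import Mathlib

open MeasureTheory Filter Set

/-- The exponential distribution with rate `r`: density `r * exp (-(r * x))` on `[0, ∞)`. -/
noncomputable def expMeas (r : ℝ) : Measure ℝ :=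
  volume.withDensity fun x => ENNReal.ofReal (if 0 ≤ x then r * Real.exp (-(r * x)) else 0)

open ProbabilityTheory in
lemma expMeas_eq (r : ℝ) : expMeas r = expMeasure r := by
  unfold expMeas expMeasure gammaMeasure
  congr 1
  funext x
  rw [← exponentialPDF_eq]
  rfl

open ProbabilityTheory in
lemma expMeas_prob {r : ℝ} (hr : 0 < r) : IsProbabilityMeasure (expMeas r) := by
  rw [expMeas_eq]; exact isProbabilityMeasure_expMeasure hr

open ProbabilityTheory in
lemma expMeas_Iic {r : ℝ} (hr : 0 < r) {x : ℝ} (hx : 0 ≤ x) :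
    expMeas r (Iic x) = ENNReal.ofReal (1 - Real.exp (-(r * x))) := by
  unfold expMeas
  rw [withDensity_apply _ measurableSet_Iic]
  have := lintegral_exponentialPDF_eq_antiDeriv hr x
  simp only [exponentialPDF_eq] at this
  rw [this, if_pos hx]

lemma expMeas_Ioi {r : ℝ} (hr : 0 < r) {x : ℝ} (hx : 0 ≤ x) :
    expMeas r (Ioi x) = ENNReal.ofReal (Real.exp (-(r * x))) := by
  have hprob : IsProbabilityMeasure (expMeas r) := expMeas_prob hr
  have h1 : expMeas r (Ioi x) = 1 - expMeas r (Iic x) := by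
    rw [← compl_Iic, measure_compl measurableSet_Iic (measure_ne_top _ _), measure_univ]
  have hle : Real.exp (-(r * x)) ≤ 1 := Real.exp_le_one_iff.2 (by nlinarith)
  rw [h1, expMeas_Iic hr hx, ENNReal.ofReal_sub _ (Real.exp_nonneg _), ENNReal.ofReal_one,
    ENNReal.sub_sub_cancel ENNReal.one_ne_top (ENNReal.ofReal_le_one.2 hle)]

theorem exp_pair_hda_medium_cone :
    ∀ x1 x2 : ℝ,
      (Tendsto (fun n : ℕ =>
          (n : ℝ) * (((expMeas 1).prod (expMeas 2))
            (Iic (Real.log n / 2 + x1) ×ˢ Ioi (Real.log n / 2 + x2))).toReal)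
        atTop (nhds (Real.exp (-(2 * x2))))) ∧
      (Tendsto (fun n : ℕ =>
          (n : ℝ) * (((expMeas 1).prod (expMeas 2))
            (Ioi (Real.log n / 2 + x1) ×ˢ Ioi (Real.log n / 2 + x2))).toReal)
        atTop (nhds 0)) := by
  intro x1 x2
  haveI : IsProbabilityMeasure (expMeas 2) := expMeas_prob two_pos
  haveI : SFinite (expMeas 2) := inferInstance
  have hlog : Tendsto (fun n : ℕ => Real.log n) atTop atTop :=
    Real.tendsto_log_atTop.comp tendsto_natCast_atTop_atTop
  have hb : ∀ c : ℝ, Tendsto (fun n : ℕ => Real.log n / 2 + c) atTop atTop := fun c =>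
    tendsto_atTop_add_const_right _ c (hlog.atTop_div_const two_pos)
  have hexp0 : ∀ c : ℝ, Tendsto (fun n : ℕ => Real.exp (-(Real.log n / 2 + c))) atTop (nhds 0) :=
    fun c => Real.tendsto_exp_atBot.comp (tendsto_neg_atBot_iff.mpr (hb c))
  have hev : ∀ᶠ n : ℕ in atTop,
      0 ≤ Real.log n / 2 + x1 ∧ 0 ≤ Real.log n / 2 + x2 ∧ (1:ℝ) ≤ n := by
    filter_upwards [(hb 0).eventually_ge_atTop ((-x1) ⊔ (-x2)), eventually_ge_atTop 1]
      with n h1 h2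
    refine ⟨by simp only [add_zero] at h1; linarith [le_max_left (-x1) (-x2)], ?_,
      by exact_mod_cast h2⟩
    simp only [add_zero] at h1; linarith [le_max_right (-x1) (-x2)]
  constructor
  · have htend : Tendsto (fun n : ℕ =>
        (1 - Real.exp (-(Real.log n / 2 + x1))) * Real.exp (-(2 * x2))) atTop
        (nhds (Real.exp (-(2 * x2)))) := by
      have := ((hexp0 x1).const_sub 1).mul_const (Real.exp (-(2 * x2)))
      simpa using this
    refine htend.congr' ?_
    filter_upwards [hev] with n ⟨h1, h2, h3⟩
    have hn0 : (0:ℝ) < n := lt_of_lt_of_le one_pos h3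
    rw [Measure.prod_prod, expMeas_Iic one_pos h1, expMeas_Ioi two_pos h2,
      ENNReal.toReal_mul, ENNReal.toReal_ofReal
        (by have : Real.exp (-(1 * (Real.log n / 2 + x1))) ≤ 1 :=
              Real.exp_le_one_iff.2 (by linarith)
            linarith),
      ENNReal.toReal_ofReal (Real.exp_nonneg _), one_mul]
    calc (1 - Real.exp (-(Real.log n / 2 + x1))) * Real.exp (-(2 * x2))
        = (1 - Real.exp (-(Real.log n / 2 + x1))) *
          (Real.exp (Real.log n) * Real.exp (-(2 * (Real.log n / 2 + x2)))) := by
          rw [← Real.exp_add, show Real.log (n:ℝ) + -(2 * (Real.log (n:ℝ) / 2 + x2))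
            = -(2 * x2) by ring]
      _ = (n:ℝ) * ((1 - Real.exp (-(Real.log n / 2 + x1))) *
          Real.exp (-(2 * (Real.log n / 2 + x2)))) := by rw [Real.exp_log hn0]; ring
  · have htend : Tendsto (fun n : ℕ =>
        Real.exp (-(Real.log n / 2 + (x1 + 2 * x2)))) atTop (nhds 0) := hexp0 _
    refine htend.congr' ?_
    filter_upwards [hev] with n ⟨h1, h2, h3⟩
    have hn0 : (0:ℝ) < n := lt_of_lt_of_le one_pos h3
    rw [Measure.prod_prod, expMeas_Ioi one_pos h1, expMeas_Ioi two_pos h2,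
      ENNReal.toReal_mul, ENNReal.toReal_ofReal (Real.exp_nonneg _),
      ENNReal.toReal_ofReal (Real.exp_nonneg _)]
    calc Real.exp (-(Real.log n / 2 + (x1 + 2 * x2)))
        = Real.exp (Real.log n) *
          (Real.exp (-(1 * (Real.log n / 2 + x1))) * Real.exp (-(2 * (Real.log n / 2 + x2)))) := by
          rw [← Real.exp_add, ← Real.exp_add]; congr 1; ring
      _ = (n:ℝ) * (Real.exp (-(1 * (Real.log n / 2 + x1))) *
          Real.exp (-(2 * (Real.log n / 2 + x2)))) := by rw [Real.exp_log hn0]
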